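/- If φ is an algebraic closure operator on a set X with φ(∅)=∅ satisfying the anti-exchange property, then for every x ∈ X, the set φ({x}) \ {x} is closed under φ. -/

import Mathlib

/-- φ is a closure operator: extensive, monotone, idempotent. -/
def IsClosureOp {X : Type*} (φ : Set X → Set X) : Prop :=
  (∀ A, A ⊆ φ A) ∧ (∀ A B, A ⊆ B → φ A ⊆ φ B) ∧ (∀ A, φ (φ A) = φ A)

/-- φ is algebraic (finitary): the closure of a set is the union of closures of its
finite subsets. -/
def IsAlgebraicOp {X : Type*} (φ : Set X → Set X) : Prop :=
  ∀ A, φ A = ⋃₀ {T | ∃ B, B ⊆ A ∧ B.Finite ∧ T = φ B}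

/-- The anti-exchange property. -/
def AntiExchange {X : Type*} (φ : Set X → Set X) : Prop :=
  ∀ (x y : X) (A : Set X), x ≠ y → φ A = A → x ∉ A →
    x ∈ φ (A ∪ {y}) → y ∉ φ (A ∪ {x})

/-- A convex geometry: a zero-closure operator with the anti-exchange property. -/
def IsConvexGeometry {X : Type*} (φ : Set X → Set X) : Prop :=
  IsClosureOp φ ∧ φ ∅ = ∅ ∧ AntiExchange φ

/-- An algebraic convex geometry. -/
def IsAlgConvexGeometry {X : Type*} (φ : Set X → Set X) : Prop :=
  IsClosureOp φ ∧ IsAlgebraicOp φ ∧ φ ∅ = ∅ ∧ AntiExchange φ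

/-- An algebraic subset of Pow X : closed under arbitrary intersections
(with ⋂₀ ∅ = X) and under unions of nonempty up-directed subfamilies. -/
def IsAlgSubset {X : Type*} (F : Set (Set X)) : Prop :=
  (∀ S ⊆ F, ⋂₀ S ∈ F) ∧
  (∀ S ⊆ F, S.Nonempty → (∀ A ∈ S, ∀ B ∈ S, ∃ C ∈ S, A ∪ B ⊆ C) → ⋃₀ S ∈ F)

/-- A maximal chain in the lattice of φ-closed sets. -/
def IsMaxChainOfClosed {X : Type*} (φ : Set X → Set X) (C : Set (Set X)) : Prop :=
  C ⊆ {Y | φ Y = Y} ∧ IsChain (· ⊆ ·) C ∧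
  ∀ T, φ T = T → (∀ A ∈ C, T ⊆ A ∨ A ⊆ T) → T ∈ C

/-- In an algebraic convex geometry, φ({x}) \ {x} is closed for every x. -/
theorem stmt0 {X : Type*} (φ : Set X → Set X)
    (hclo : IsClosureOp φ) (halg : IsAlgebraicOp φ) (hzero : φ ∅ = ∅)
    (haep : AntiExchange φ) :
    ∀ x : X, φ (φ {x} \ {x}) = φ {x} \ {x} := by
  obtain ⟨hext, hmono, hidem⟩ := hclo
  intro x
  -- key lemma: for finite B ⊆ φ{x}\{x}, x ∉ φ B
  have key : ∀ B : Set X, B.Finite → B ⊆ φ {x} \ {x} → x ∉ φ B := by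
    intro B hB
    refine Set.Finite.induction_on B hB ?_ ?_
    · intro _ h; rw [hzero] at h; exact h
    · intro a s ha hs IH hsub hx
      have hssub : s ⊆ φ {x} \ {x} := fun y hy => hsub (Set.mem_insert_of_mem a hy)
      have hxs : x ∉ φ s := IH hssub
      have hax : a ∈ φ {x} \ {x} := hsub (Set.mem_insert a s)
      have hxa : x ≠ a := fun h => hax.2 (by simp [← h])
      have h1 : x ∈ φ (φ s ∪ {a}) := by
        refine hmono _ _ ?_ hx
        intro y hy
        rcases hy with rfl | hy
        · exact Or.inr rfl
        · exact Or.inl (hext s hy)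
      have h2 := haep x a (φ s) hxa (hidem s) hxs h1
      exact h2 (hmono _ _ (fun y hy => Or.inr hy) hax.1)
  apply Set.Subset.antisymm
  · intro z hz
    constructor
    · have h1 : φ {x} \ {x} ⊆ φ {x} := fun y hy => hy.1
      exact ((hmono _ _ h1).trans (hidem {x}).subset) hz
    · intro hzx
      rw [Set.mem_singleton_iff] at hzx
      subst hzx
      rw [halg] at hz
      obtain ⟨T, ⟨B, hBsub, hBfin, rfl⟩, hzT⟩ := hz
      exact key B hBfin hBsub hzT
  · exact hext _
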